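/- There exists a real constant t₀ ≥ 0 such that for all integers d ≥ 1, g ≥ 0 and all real t ≥ t₀, the sum over all d-tuples (g₁,…,g_d) of nonnegative integers with g₁+⋯+g_d = g of ((1 + g/2)/((1 + g₁/2)⋯(1 + g_d/2)))^t is at most 4^(d-1). -/

import Mathlib

open Finset

namespace Stmt2Aux

noncomputable def F (n : ℕ) : ℝ := 1 + (n : ℝ) / 2

lemma F_pos (n : ℕ) : 0 < F n := by unfold F; positivity

lemma prodF_pos {k : ℕ} (x : Fin k → ℕ) : 0 < ∏ i, F (x i) :=
  Finset.prod_pos fun i _ => F_pos (x i)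

noncomputable def phi (n : ℕ) : ℝ :=
  if n = 0 then 1 else if n = 1 then 8/9 else if n = 2 then 3/4 else 4/((n : ℝ)+2)

lemma phi_pos (n : ℕ) : 0 < phi n := by
  unfold phi; split_ifs <;> positivity

lemma phi_le_one (n : ℕ) : phi n ≤ 1 := by
  unfold phi
  split_ifs with h0 h1 h2
  · norm_num
  · norm_num
  · norm_num
  · rw [div_le_one (by positivity)]
    have : (3 : ℝ) ≤ (n : ℝ) := by exact_mod_cast (by omega : 3 ≤ n)
    linarith

lemma ratio_le {i j : ℕ} (hij : i ≤ j) : F (i+j) / (F i * F j) ≤ phi i := by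
  have hFij := mul_pos (F_pos i) (F_pos j)
  rw [div_le_iff₀ hFij]
  rcases i with _ | _ | _ | i
  · have hphi : phi 0 = 1 := by norm_num [phi]
    rw [hphi]
    simp only [F]
    push_cast
    nlinarith [Nat.cast_nonneg (α := ℝ) j]
  · have hj : (1:ℝ) ≤ (j:ℝ) := by exact_mod_cast hij
    have hphi : phi 1 = 8/9 := by norm_num [phi]
    rw [hphi]
    simp only [F]
    push_cast
    nlinarith
  · have hj : (2:ℝ) ≤ (j:ℝ) := by exact_mod_cast hij
    have hphi : phi 2 = 3/4 := by norm_num [phi]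
    rw [hphi]
    simp only [F]
    push_cast
    nlinarith
  · have hj : ((i:ℝ) + 3) ≤ (j:ℝ) := by exact_mod_cast hij
    have h3 : (i + 3 : ℕ) ≠ 0 := by omega
    have h4 : (i + 3 : ℕ) ≠ 1 := by omega
    have h5 : (i + 3 : ℕ) ≠ 2 := by omega
    have hphi : phi (i+3) = 4/((i:ℝ)+5) := by
      simp only [phi, if_neg h3, if_neg h4, if_neg h5]
      push_cast
      ring_nf
    have hiR : (0:ℝ) ≤ (i:ℝ) := Nat.cast_nonneg i
    have hrw : phi (i+3) * (F (i+3) * F j) = 2 * (1 + (j:ℝ)/2) := by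
      rw [hphi]
      simp only [F]
      push_cast
      field_simp
      ring
    have hidx : i + 1 + 1 + 1 = i + 3 := by omega
    rw [hidx, hrw]
    simp only [F]
    push_cast
    linarith

lemma term_le (i j : ℕ) (t : ℝ) (ht : 0 ≤ t) :
    (F (i+j) / (F i * F j)) ^ t ≤ phi i ^ t + phi j ^ t := by
  have hnn : 0 ≤ F (i+j) / (F i * F j) :=
    div_nonneg (F_pos _).le (mul_pos (F_pos i) (F_pos j)).le
  rcases le_total i j with h | h
  · have h1 : (F (i+j) / (F i * F j)) ^ t ≤ phi i ^ t :=
      Real.rpow_le_rpow hnn (ratio_le h) ht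
    have h2 : 0 ≤ phi j ^ t := Real.rpow_nonneg (phi_pos j).le t
    linarith
  · have heq : F (i+j) / (F i * F j) = F (j+i) / (F j * F i) := by
      rw [Nat.add_comm i j, mul_comm]
    have h1 : (F (i+j) / (F i * F j)) ^ t ≤ phi j ^ t := by
      rw [heq]
      exact Real.rpow_le_rpow (heq ▸ hnn) (ratio_le h) ht
    have h2 : 0 ≤ phi i ^ t := Real.rpow_nonneg (phi_pos i).le t
    linarith

lemma phi_rpow_le (n : ℕ) (t : ℝ) (ht : 20 ≤ t) : phi n ^ t ≤ phi n ^ (20 : ℕ) := by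
  have h2 : phi n ^ (((20:ℕ)):ℝ) = phi n ^ (20:ℕ) := Real.rpow_natCast _ _
  rw [← h2]
  exact Real.rpow_le_rpow_of_exponent_ge (phi_pos n) (phi_le_one n) (by exact_mod_cast ht)

noncomputable def c : ℝ := 16 * (4/5 : ℝ)^18

lemma c_pos : 0 < c := by unfold c; positivity

lemma sum_psi_le (m : ℕ) :
    ∑ h ∈ range (m+4), phi h ^ (20 : ℕ) ≤ 2 - c / ((m : ℝ) + 5) := by
  induction m with
  | zero =>
    have hsum : ∑ h ∈ range (0+4), phi h ^ (20:ℕ)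
        = phi 0 ^ (20:ℕ) + phi 1 ^ (20:ℕ) + phi 2 ^ (20:ℕ) + phi 3 ^ (20:ℕ) := by
      rw [show (0+4:ℕ) = 3 + 1 from rfl, Finset.sum_range_succ,
        Finset.sum_range_succ, Finset.sum_range_succ, Finset.sum_range_one]
    rw [hsum]
    have h0 : phi 0 = 1 := by norm_num [phi]
    have h1 : phi 1 = 8/9 := by norm_num [phi]
    have h2 : phi 2 = 3/4 := by norm_num [phi]
    have h3 : phi 3 = 4/5 := by norm_num [phi]
    rw [h0, h1, h2, h3]
    unfold c
    norm_num
  | succ m ih =>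
    rw [show m + 1 + 4 = (m + 4) + 1 by ring, Finset.sum_range_succ]
    have hphi : phi (m+4) = 4 / ((m:ℝ) + 6) := by
      have h3 : (m + 4 : ℕ) ≠ 0 := by omega
      have h4 : (m + 4 : ℕ) ≠ 1 := by omega
      have h5 : (m + 4 : ℕ) ≠ 2 := by omega
      simp only [phi, if_neg h3, if_neg h4, if_neg h5]
      push_cast
      ring_nf
    have hm0 : (0:ℝ) ≤ (m:ℝ) := Nat.cast_nonneg m
    have key : phi (m+4) ^ (20:ℕ) ≤ c / ((m:ℝ) + 5) - c / ((m:ℝ) + 6) := by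
      rw [hphi]
      have hsub : c / ((m:ℝ)+5) - c / ((m:ℝ)+6) = c / ((((m:ℝ)+5))*(((m:ℝ)+6))) := by
        field_simp
        ring
      rw [hsub, div_pow, div_le_div_iff₀ (by positivity) (by positivity)]
      have hC : c * 5^18 = 4^20 := by unfold c; norm_num
      have h18 : (5:ℝ)^18 ≤ ((m:ℝ)+6)^18 := by
        apply pow_le_pow_left₀ (by norm_num) (by linarith)
      have h2 : ((m:ℝ)+5)*((m:ℝ)+6) ≤ ((m:ℝ)+6)^2 := by nlinarith
      have hkey : (((m:ℝ)+5)*((m:ℝ)+6)) * 5^18 ≤ ((m:ℝ)+6)^2 * ((m:ℝ)+6)^18 :=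
        mul_le_mul h2 h18 (by positivity) (by positivity)
      have hpow : ((m:ℝ)+6)^2 * ((m:ℝ)+6)^18 = ((m:ℝ)+6)^20 := by ring
      nlinarith [mul_le_mul_of_nonneg_left hkey c_pos.le]
    have hcast : c / ((m:ℝ) + 1 + 5) = c / ((m:ℝ) + 6) := by
      rw [show ((m:ℝ) + 1 + 5) = (m:ℝ) + 6 by ring]
    push_cast
    rw [hcast]
    push_cast at ih
    linarith

lemma sum_phi_le (g : ℕ) (t : ℝ) (ht : 20 ≤ t) :
    ∑ h ∈ range (g+1), phi h ^ t ≤ 2 := by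
  have step1 : ∑ h ∈ range (g+1), phi h ^ t ≤ ∑ h ∈ range (g+1), phi h ^ (20:ℕ) :=
    Finset.sum_le_sum fun h _ => phi_rpow_le h t ht
  have step2 : ∑ h ∈ range (g+1), phi h ^ (20:ℕ) ≤ ∑ h ∈ range (g+1+4), phi h ^ (20:ℕ) :=
    Finset.sum_le_sum_of_subset_of_nonneg (Finset.range_subset_range.mpr (by omega))
      (fun n _ _ => pow_nonneg (phi_pos n).le _)
  have step3 : ∑ h ∈ range (g+1+4), phi h ^ (20:ℕ) ≤ 2 - c / ((g:ℝ) + 1 + 5) := by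
    have := sum_psi_le (g+1)
    push_cast at this
    exact this
  have hc : 0 ≤ c / ((g:ℝ) + 1 + 5) := div_nonneg c_pos.le (by positivity)
  linarith

lemma lemB (g : ℕ) (t : ℝ) (ht : 20 ≤ t) :
    ∑ p ∈ Finset.HasAntidiagonal.antidiagonal g, (F g / (F p.1 * F p.2)) ^ t ≤ 4 := by
  have ht0 : (0:ℝ) ≤ t := by linarith
  have hterm : ∀ p ∈ Finset.HasAntidiagonal.antidiagonal g,
      (F g / (F p.1 * F p.2)) ^ t ≤ phi p.1 ^ t + phi p.2 ^ t := by
    intro p hp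
    rw [Finset.HasAntidiagonal.mem_antidiagonal] at hp
    rw [← hp]
    exact term_le p.1 p.2 t ht0
  have hrefl : ∑ k ∈ range (g+1), phi (g-k) ^ t = ∑ k ∈ range (g+1), phi k ^ t := by
    rw [← Finset.sum_range_reflect (fun k => phi k ^ t) (g+1)]
    apply Finset.sum_congr rfl
    intro k hk
    have : g + 1 - 1 - k = g - k := by omega
    rw [this]
  calc ∑ p ∈ Finset.HasAntidiagonal.antidiagonal g, (F g / (F p.1 * F p.2)) ^ t
      ≤ ∑ p ∈ Finset.HasAntidiagonal.antidiagonal g, (phi p.1 ^ t + phi p.2 ^ t) :=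
        Finset.sum_le_sum hterm
    _ = ∑ p ∈ Finset.HasAntidiagonal.antidiagonal g, phi p.1 ^ t
        + ∑ p ∈ Finset.HasAntidiagonal.antidiagonal g, phi p.2 ^ t := Finset.sum_add_distrib
    _ = ∑ k ∈ range (g+1), phi k ^ t + ∑ k ∈ range (g+1), phi (g-k) ^ t := by
        rw [Finset.Nat.sum_antidiagonal_eq_sum_range_succ_mk,
          Finset.Nat.sum_antidiagonal_eq_sum_range_succ_mk]
    _ = ∑ k ∈ range (g+1), phi k ^ t + ∑ k ∈ range (g+1), phi k ^ t := by rw [hrefl]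
    _ ≤ 2 + 2 := add_le_add (sum_phi_le g t ht) (sum_phi_le g t ht)
    _ = 4 := by norm_num

lemma sum_AT_succ (k n : ℕ) (G : (Fin (k+1) → ℕ) → ℝ) :
    ∑ x ∈ Finset.Nat.antidiagonalTuple (k+1) n, G x
      = ∑ p ∈ Finset.HasAntidiagonal.antidiagonal n,
          ∑ y ∈ Finset.Nat.antidiagonalTuple k p.2, G (Fin.cons p.1 y) := by
  rw [Finset.sum_sigma' (Finset.HasAntidiagonal.antidiagonal n)
    (fun p => Finset.Nat.antidiagonalTuple k p.2) (fun p y => G (Fin.cons p.1 y))]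
  refine Finset.sum_nbij'
    (i := fun (x : Fin (k+1) → ℕ) =>
      (⟨(x 0, ∑ i : Fin k, x i.succ), fun i => x i.succ⟩ : Σ _p : ℕ × ℕ, (Fin k → ℕ)))
    (j := fun (q : Σ _p : ℕ × ℕ, (Fin k → ℕ)) => Fin.cons q.1.1 q.2)
    ?_ ?_ ?_ ?_ ?_
  · intro x hx
    rw [Finset.Nat.mem_antidiagonalTuple] at hx
    simp only [Finset.mem_sigma, Finset.HasAntidiagonal.mem_antidiagonal, Finset.Nat.mem_antidiagonalTuple]
    refine ⟨by rw [← hx, Fin.sum_univ_succ], by trivial⟩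
  · rintro ⟨⟨p1, p2⟩, y⟩ hq
    simp only [Finset.mem_sigma, Finset.HasAntidiagonal.mem_antidiagonal,
      Finset.Nat.mem_antidiagonalTuple] at hq
    rw [Finset.Nat.mem_antidiagonalTuple, Fin.sum_univ_succ]
    simp only [Fin.cons_zero, Fin.cons_succ]
    rw [hq.2, hq.1]
  · intro x hx
    exact Fin.cons_self_tail x
  · rintro ⟨⟨p1, p2⟩, y⟩ hq
    simp only [Finset.mem_sigma, Finset.HasAntidiagonal.mem_antidiagonal,
      Finset.Nat.mem_antidiagonalTuple] at hq
    simp only [Fin.cons_zero, Fin.cons_succ]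
    rw [hq.2]
  · intro x hx
    show G x = G (Fin.cons (x 0) (Fin.tail x))
    rw [Fin.cons_self_tail]

lemma lemA : ∀ (k g : ℕ) (t : ℝ), 20 ≤ t →
    ∑ x ∈ Finset.Nat.antidiagonalTuple (k+1) g, (F g / ∏ i, F (x i)) ^ t ≤ (4:ℝ) ^ k := by
  intro k
  induction k with
  | zero =>
    intro g t ht
    rw [Finset.Nat.antidiagonalTuple_one, Finset.sum_singleton]
    have hprod : ∏ i : Fin 1, F (![g] i) = F g := by
      rw [Fin.prod_univ_one]
      rfl
    rw [hprod, div_self (F_pos g).ne', Real.one_rpow]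
    norm_num
  | succ k ih =>
    intro g t ht
    have ht0 : (0:ℝ) ≤ t := by linarith
    rw [sum_AT_succ (k+1) g]
    have key : ∀ p : ℕ × ℕ,
        ∑ y ∈ Finset.Nat.antidiagonalTuple (k+1) p.2,
          (F g / ∏ i, F ((Fin.cons p.1 y : Fin (k+1+1) → ℕ) i)) ^ t
        ≤ (F g / (F p.1 * F p.2)) ^ t * (4:ℝ)^k := by
      intro p
      have hA : 0 ≤ F g / (F p.1 * F p.2) :=
        div_nonneg (F_pos g).le (mul_pos (F_pos p.1) (F_pos p.2)).le
      have hsum : ∀ y : Fin (k+1) → ℕ,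
          (F g / ∏ i, F ((Fin.cons p.1 y : Fin (k+1+1) → ℕ) i)) ^ t
            = (F g / (F p.1 * F p.2)) ^ t * (F p.2 / ∏ i, F (y i)) ^ t := by
        intro y
        have hB : 0 ≤ F p.2 / ∏ i, F (y i) := div_nonneg (F_pos p.2).le (prodF_pos y).le
        rw [← Real.mul_rpow hA hB]
        congr 1
        have hprod : ∏ i, F ((Fin.cons p.1 y : Fin (k+1+1) → ℕ) i) = F p.1 * ∏ i, F (y i) := by
          rw [Fin.prod_univ_succ]
          simp only [Fin.cons_zero, Fin.cons_succ]
        rw [hprod]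
        have h1 : F p.2 ≠ 0 := (F_pos p.2).ne'
        have h2 : F p.1 ≠ 0 := (F_pos p.1).ne'
        have h3 : (∏ i, F (y i)) ≠ 0 := (prodF_pos y).ne'
        field_simp
      calc ∑ y ∈ Finset.Nat.antidiagonalTuple (k+1) p.2,
            (F g / ∏ i, F ((Fin.cons p.1 y : Fin (k+1+1) → ℕ) i)) ^ t
          = (F g / (F p.1 * F p.2)) ^ t *
              ∑ y ∈ Finset.Nat.antidiagonalTuple (k+1) p.2, (F p.2 / ∏ i, F (y i)) ^ t := by
            rw [Finset.mul_sum]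
            exact Finset.sum_congr rfl fun y _ => hsum y
        _ ≤ (F g / (F p.1 * F p.2)) ^ t * (4:ℝ)^k :=
            mul_le_mul_of_nonneg_left (ih p.2 t ht) (Real.rpow_nonneg hA t)
    calc ∑ p ∈ Finset.HasAntidiagonal.antidiagonal g, ∑ y ∈ Finset.Nat.antidiagonalTuple (k+1) p.2,
          (F g / ∏ i, F ((Fin.cons p.1 y : Fin (k+1+1) → ℕ) i)) ^ t
        ≤ ∑ p ∈ Finset.HasAntidiagonal.antidiagonal g, (F g / (F p.1 * F p.2)) ^ t * (4:ℝ)^k :=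
          Finset.sum_le_sum fun p _ => key p
      _ = (∑ p ∈ Finset.HasAntidiagonal.antidiagonal g, (F g / (F p.1 * F p.2)) ^ t) * (4:ℝ)^k := by
          rw [Finset.sum_mul]
      _ ≤ 4 * (4:ℝ)^k := by
          apply mul_le_mul_of_nonneg_right (lemB g t ht)
          positivity
      _ = (4:ℝ)^(k+1) := by ring

end Stmt2Aux

/-- There is `t₀ ≥ 0` such that for all `d ≥ 1`, `g ≥ 0` and `t ≥ t₀`, the sum over
`d`-tuples of nonnegative integers with sum `g` of
`((1 + g/2)/((1 + g₁/2)⋯(1 + g_d/2)))^t` is at most `4^(d-1)`. -/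
theorem stmt2 : ∃ t₀ : ℝ, 0 ≤ t₀ ∧ ∀ (d g : ℕ), 1 ≤ d → ∀ t : ℝ, t₀ ≤ t →
    ∑ x ∈ Finset.Nat.antidiagonalTuple d g,
      ((1 + (g : ℝ) / 2) / ∏ i, (1 + (x i : ℝ) / 2)) ^ t ≤ (4 : ℝ) ^ (d - 1) := by
  refine ⟨20, by norm_num, ?_⟩
  intro d g hd t ht
  obtain ⟨k, rfl⟩ : ∃ k, d = k + 1 := ⟨d - 1, by omega⟩
  have := Stmt2Aux.lemA k g t ht
  simp only [Stmt2Aux.F] at this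
  simpa using this
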